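/- Fix a monic polynomial Φ_n with all zeros in the open unit disk and two distinct points λ, μ on the unit circle. Then the zeros of the paraorthogonal polynomials zΦ_n(z) − conj(λ)Φ_n^*(z) and zΦ_n(z) − conj(μ)Φ_n^*(z) strictly interlace on the unit circle. -/

import Mathlib

open Polynomial

/-- The reversed, coefficient-conjugated polynomial `τ_n(p)(z) = z^n conj(p(1/conj z))`. -/
noncomputable def polyStar (n : ℕ) (p : Polynomial ℂ) : Polynomial ℂ :=
  (p.map (starRingEnd ℂ)).reflect n

section AuxPOPUC
open Complex

lemma HasDerivAt.complexIm {f : ℝ → ℂ} {f' : ℂ} {x : ℝ} (h : HasDerivAt f f' x) :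
    HasDerivAt (fun t => (f t).im) f'.im x := by
  simpa [Function.comp_def] using (Complex.imCLM.hasFDerivAt.comp x h.hasFDerivAt).hasDerivAt

lemma mem_slit {w : ℂ} (hw : ‖w‖ < 1) : (1 - w) ∈ Complex.slitPlane := by
  left
  have : w.re ≤ ‖w‖ := Complex.re_le_norm w
  simp only [Complex.sub_re, Complex.one_re]
  linarith

lemma normSq_lt_one {w : ℂ} (hw : ‖w‖ < 1) : Complex.normSq w < 1 := by
  rw [← Complex.sq_norm]
  have : ‖w‖ = ‖w‖ := rfl
  nlinarith [norm_nonneg w]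

lemma re_inv_gt {w : ℂ} (hw : ‖w‖ < 1) : 1/2 < ((1 - w)⁻¹).re := by
  have h0 : (1 - w) ≠ 0 := Complex.slitPlane_ne_zero (mem_slit hw)
  have hns : 0 < Complex.normSq (1 - w) := Complex.normSq_pos.mpr h0
  have h1 : Complex.normSq w < 1 := normSq_lt_one hw
  have hexp : Complex.normSq (1 - w) = 1 - 2 * w.re + Complex.normSq w := by
    simp [Complex.normSq_apply, Complex.sub_re, Complex.sub_im]; ring
  rw [Complex.inv_re, lt_div_iff₀ hns]
  have hexp2 : Complex.normSq w = w.re^2 + w.im^2 := by simp [Complex.normSq_apply]; ring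
  have hre : (1 - w).re = 1 - w.re := by simp
  nlinarith

-- Im (I * w / (1 - w)) > -1/2  for ‖w‖<1
lemma im_term_gt {w : ℂ} (hw : ‖w‖ < 1) : -(1/2 : ℝ) < (Complex.I * w / (1 - w)).im := by
  have h0 : (1 - w) ≠ 0 := Complex.slitPlane_ne_zero (mem_slit hw)
  have : Complex.I * w / (1 - w) = Complex.I * ((1 - w)⁻¹ - 1) := by
    field_simp
    ring
  rw [this]
  simp only [Complex.mul_im, Complex.I_re, Complex.I_im, Complex.sub_re, Complex.one_re]
  have := re_inv_gt hw
  simp only [Complex.sub_im, Complex.one_im]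
  linarith

-- c / conj c = exp (2 (log c).im * I)
lemma div_conj_eq {c : ℂ} (hc : c ≠ 0) :
    c / (starRingEnd ℂ) c = Complex.exp ((2 * (Complex.log c).im : ℝ) * Complex.I) := by
  have h2 : (starRingEnd ℂ) c = Complex.exp ((starRingEnd ℂ) (Complex.log c)) := by
    rw [Complex.exp_conj, Complex.exp_log hc]
  calc c / (starRingEnd ℂ) c
      = Complex.exp (Complex.log c) / Complex.exp ((starRingEnd ℂ) (Complex.log c)) := by
        rw [← h2, Complex.exp_log hc]
    _ = Complex.exp (Complex.log c - (starRingEnd ℂ) (Complex.log c)) := (Complex.exp_sub _ _).symm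
    _ = Complex.exp ((2 * (Complex.log c).im : ℝ) * Complex.I) := by
        rw [Complex.sub_conj]

lemma reflect_prod_conj (l : List ℂ) :
    Polynomial.reflect l.length
      (((l.map (fun a => X - C a)).prod).map (starRingEnd ℂ))
      = (l.map (fun a => 1 - C ((starRingEnd ℂ) a) * X)).prod := by
  induction l with
  | nil => simp
  | cons a l ih =>
      have hmap : ((List.map (fun a => X - C a) (a :: l)).prod).map (starRingEnd ℂ)
          = (X - C ((starRingEnd ℂ) a)) *
            (((l.map (fun a => X - C a)).prod).map (starRingEnd ℂ)) := by
        simp [Polynomial.map_mul]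
      have hdeg1 : (X - C ((starRingEnd ℂ) a)).natDegree ≤ 1 := by
        simp [Polynomial.natDegree_X_sub_C]
      have hdeg2 : (((l.map (fun a => X - C a)).prod).map (starRingEnd ℂ)).natDegree ≤ l.length := by
        refine le_trans Polynomial.natDegree_map_le ?_
        refine le_trans (Polynomial.natDegree_list_prod_le _) ?_
        have : ∀ p ∈ l.map (fun a => X - C a), p.natDegree ≤ 1 := by
          intro p hp
          simp only [List.mem_map] at hp
          obtain ⟨b, _, rfl⟩ := hp
          simp [Polynomial.natDegree_X_sub_C]
        have hb := List.sum_le_card_nsmul ((l.map (fun a => X - C a)).map Polynomial.natDegree) 1 (by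
          intro x hx
          simp only [List.mem_map] at hx
          obtain ⟨p, hp, rfl⟩ := hx
          obtain ⟨b, _, rfl⟩ := hp
          simp [Polynomial.natDegree_X_sub_C])
        simpa using hb
      rw [List.length_cons, hmap]
      have : l.length + 1 = 1 + l.length := by ring
      rw [this, Polynomial.reflect_mul _ _ hdeg1 hdeg2, ih]
      have hrefl : Polynomial.reflect 1 (X - C ((starRingEnd ℂ) a))
          = 1 - C ((starRingEnd ℂ) a) * X := by
        rw [Polynomial.reflect_sub, Polynomial.reflect_C]
        simp
      rw [hrefl]
      simp

lemma key_identity (a u : ℂ) :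
    Complex.normSq (1 - (starRingEnd ℂ) a * u) - Complex.normSq (u - a)
      = (1 - Complex.normSq a) * (1 - Complex.normSq u) := by
  simp only [Complex.normSq_apply, Complex.sub_re, Complex.sub_im, Complex.mul_re,
    Complex.mul_im, Complex.conj_re, Complex.conj_im, Complex.one_re, Complex.one_im]
  ring

lemma normSq_lt_one' {w : ℂ} (hw : ‖w‖ < 1) : Complex.normSq w < 1 := by
  rw [← Complex.sq_norm]
  have : ‖w‖ = ‖w‖ := rfl
  nlinarith [norm_nonneg w]

lemma norm_lt_of_normSq_lt {x y : ℂ} (h : Complex.normSq x < Complex.normSq y) : ‖x‖ < ‖y‖ := by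
  have hx : ‖x‖^2 = Complex.normSq x := Complex.sq_norm x
  have hy : ‖y‖^2 = Complex.normSq y := Complex.sq_norm y
  nlinarith [norm_nonneg x, norm_nonneg y]

lemma in_disk_lt {a u : ℂ} (ha : ‖a‖ < 1) (hu : ‖u‖ < 1) :
    ‖u - a‖ < ‖1 - (starRingEnd ℂ) a * u‖ := by
  apply norm_lt_of_normSq_lt
  have := key_identity a u
  nlinarith [normSq_lt_one' ha, normSq_lt_one' hu]

lemma out_disk_lt {a u : ℂ} (ha : ‖a‖ < 1) (hu : 1 < ‖u‖) :
    ‖1 - (starRingEnd ℂ) a * u‖ < ‖u - a‖ := by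
  apply norm_lt_of_normSq_lt
  have := key_identity a u
  have h1 : (1:ℝ) < Complex.normSq u := by
    rw [← Complex.sq_norm]
    have : ‖u‖ = ‖u‖ := rfl
    nlinarith [norm_nonneg u]
  nlinarith [normSq_lt_one' ha]

lemma on_circle {n : ℕ} {a : Fin n → ℂ} (ha : ∀ i, ‖a i‖ < 1) {c z : ℂ} (hc : ‖c‖ = 1)
    (h : z * ∏ i, (z - a i) = c * ∏ i, (1 - (starRingEnd ℂ) (a i) * z)) : ‖z‖ = 1 := by
  have hnorm : ‖z‖ * ∏ i, ‖z - a i‖ = ∏ i, ‖1 - (starRingEnd ℂ) (a i) * z‖ := by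
    have := congrArg (fun w => ‖w‖) h
    simpa [norm_prod, hc] using this
  rcases lt_trichotomy ‖z‖ 1 with hlt | heq | hgt
  · exfalso
    have hle : ∏ i, ‖z - a i‖ ≤ ∏ i, ‖1 - (starRingEnd ℂ) (a i) * z‖ :=
      Finset.prod_le_prod (fun i _ => norm_nonneg _) (fun i _ => (in_disk_lt (ha i) hlt).le)
    have hpos : 0 < ∏ i, ‖1 - (starRingEnd ℂ) (a i) * z‖ :=
      Finset.prod_pos fun i _ =>
        lt_of_le_of_lt (norm_nonneg _) (in_disk_lt (ha i) hlt)
    have hprodnn : 0 ≤ ∏ i, ‖z - a i‖ := Finset.prod_nonneg fun i _ => norm_nonneg _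
    nlinarith [mul_lt_mul_of_pos_right hlt hpos, mul_le_mul_of_nonneg_left hle (norm_nonneg z)]
  · exact heq
  · exfalso
    have hle : ∏ i, ‖1 - (starRingEnd ℂ) (a i) * z‖ ≤ ∏ i, ‖z - a i‖ :=
      Finset.prod_le_prod (fun i _ => norm_nonneg _) (fun i _ => (out_disk_lt (ha i) hgt).le)
    have hpos : 0 < ∏ i, ‖z - a i‖ := Finset.prod_pos fun i _ => by
      have : ‖a i‖ < ‖z‖ := lt_trans (ha i) hgt
      have hne : z - a i ≠ 0 := by
        intro hzero
        rw [sub_eq_zero] at hzero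
        rw [hzero] at this
        exact lt_irrefl _ this
      simpa [norm_pos_iff] using hne
    nlinarith [mul_lt_mul_of_pos_right hgt hpos, mul_le_mul_of_nonneg_left hle (norm_nonneg z)]

noncomputable def Gfun (n : ℕ) (a : Fin n → ℂ) (t : ℝ) : ℝ :=
  ((n:ℝ)+1)*t + 2 * ∑ i, (Complex.log (1 - a i * Complex.exp (-(t:ℂ) * Complex.I))).im

lemma norm_exp_neg_I (t : ℝ) : ‖Complex.exp (-(t:ℂ) * Complex.I)‖ = 1 := by
  rw [Complex.norm_exp]
  simp

lemma norm_w_lt {a : ℂ} (ha : ‖a‖ < 1) (t : ℝ) :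
    ‖a * Complex.exp (-(t:ℂ) * Complex.I)‖ < 1 := by
  rw [norm_mul, norm_exp_neg_I, mul_one]; exact ha

lemma hasDerivAt_exp_neg_I (t : ℝ) :
    HasDerivAt (fun t : ℝ => Complex.exp (-(t:ℂ) * Complex.I))
      (Complex.exp (-(t:ℂ) * Complex.I) * -Complex.I) t := by
  have h0 : HasDerivAt (fun t : ℝ => (t : ℂ)) 1 t := Complex.ofRealCLM.hasDerivAt
  have h1 : HasDerivAt (fun t : ℝ => -(t:ℂ) * Complex.I) (-Complex.I) t := by
    simpa using (h0.neg.mul_const Complex.I)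
  exact h1.cexp

noncomputable def Gderiv (n : ℕ) (a : Fin n → ℂ) (t : ℝ) : ℝ :=
  ((n:ℝ)+1) + 2 * ∑ i,
    ((-(a i * (Complex.exp (-(t:ℂ) * Complex.I) * -Complex.I))) /
      (1 - a i * Complex.exp (-(t:ℂ) * Complex.I))).im

lemma hasDerivAt_Gfun (n : ℕ) (a : Fin n → ℂ) (ha : ∀ i, ‖a i‖ < 1) (t : ℝ) :
    HasDerivAt (Gfun n a) (Gderiv n a t) t := by
  have hsum : HasDerivAt (fun t : ℝ => ∑ i,
      (Complex.log (1 - a i * Complex.exp (-(t:ℂ) * Complex.I))).im)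
      (∑ i, ((-(a i * (Complex.exp (-(t:ℂ) * Complex.I) * -Complex.I))) /
        (1 - a i * Complex.exp (-(t:ℂ) * Complex.I))).im) t := by
    apply HasDerivAt.fun_sum
    intro i _
    have hc : HasDerivAt (fun t : ℝ => 1 - a i * Complex.exp (-(t:ℂ) * Complex.I))
        (-(a i * (Complex.exp (-(t:ℂ) * Complex.I) * -Complex.I))) t :=
      (((hasDerivAt_exp_neg_I t).const_mul (a i)).const_sub 1)
    have hslit : (1 - a i * Complex.exp (-(t:ℂ) * Complex.I)) ∈ Complex.slitPlane := by
      left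
      have h1 : (a i * Complex.exp (-(t:ℂ) * Complex.I)).re ≤ ‖a i‖ := by
        refine le_trans (Complex.re_le_norm _) ?_
        rw [norm_mul, norm_exp_neg_I, mul_one]
      have := ha i
      simp only [Complex.sub_re, Complex.one_re]
      linarith
    exact (hc.clog_real hslit).complexIm
  have hlin : HasDerivAt (fun t : ℝ => ((n:ℝ)+1)*t) ((n:ℝ)+1) t := by
    simpa using (hasDerivAt_id t).const_mul ((n:ℝ)+1)
  unfold Gfun Gderiv
  exact hlin.add (hsum.const_mul 2)

lemma Gderiv_pos (n : ℕ) (a : Fin n → ℂ) (ha : ∀ i, ‖a i‖ < 1) (t : ℝ) :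
    0 < Gderiv n a t := by
  have hterm : ∀ i : Fin n, -(1/2 : ℝ) <
      ((-(a i * (Complex.exp (-(t:ℂ) * Complex.I) * -Complex.I))) /
        (1 - a i * Complex.exp (-(t:ℂ) * Complex.I))).im := by
    intro i
    have hw : ‖a i * Complex.exp (-(t:ℂ) * Complex.I)‖ < 1 := norm_w_lt (ha i) t
    have heq : (-(a i * (Complex.exp (-(t:ℂ) * Complex.I) * -Complex.I))) /
        (1 - a i * Complex.exp (-(t:ℂ) * Complex.I))
        = Complex.I * (a i * Complex.exp (-(t:ℂ) * Complex.I)) /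
          (1 - a i * Complex.exp (-(t:ℂ) * Complex.I)) := by
      ring_nf
    rw [heq]
    exact im_term_gt hw
  have hsum : (n : ℝ) * (-(1/2 : ℝ)) ≤ ∑ i,
      ((-(a i * (Complex.exp (-(t:ℂ) * Complex.I) * -Complex.I))) /
        (1 - a i * Complex.exp (-(t:ℂ) * Complex.I))).im := by
    calc (n : ℝ) * (-(1/2 : ℝ)) = ∑ _i : Fin n, -(1/2 : ℝ) := by
          rw [Finset.sum_const, Finset.card_univ, Fintype.card_fin, nsmul_eq_mul]
      _ ≤ _ := Finset.sum_le_sum fun i _ => (hterm i).le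
  unfold Gderiv
  have : (n:ℝ) ≥ 0 := Nat.cast_nonneg n
  nlinarith

lemma Gfun_periodic (n : ℕ) (a : Fin n → ℂ) (t : ℝ) (m : ℤ) :
    Gfun n a (t + 2 * Real.pi * m) = Gfun n a t + 2 * Real.pi * ((n:ℝ)+1) * m := by
  have hexp : ∀ i : Fin n, Complex.exp (-((t + 2 * Real.pi * m : ℝ) : ℂ) * Complex.I)
      = Complex.exp (-(t:ℂ) * Complex.I) := by
    intro i
    rw [Complex.exp_eq_exp_iff_exists_int]
    refine ⟨-m, ?_⟩
    push_cast
    ring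
  unfold Gfun
  rw [Finset.sum_congr rfl (fun i _ => by rw [hexp i])]
  push_cast
  ring

lemma c_ne_zero {a : ℂ} (ha : ‖a‖ < 1) (t : ℝ) :
    (1 - a * Complex.exp (-(t:ℂ) * Complex.I)) ≠ 0 :=
  Complex.slitPlane_ne_zero (mem_slit (norm_w_lt ha t))

lemma conj_exp_neg (t : ℝ) :
    (starRingEnd ℂ) (Complex.exp (-(t:ℂ) * Complex.I)) = Complex.exp ((t:ℂ) * Complex.I) := by
  rw [← Complex.exp_conj]
  congr 1
  simp

lemma z_mul_e (t : ℝ) :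
    Complex.exp ((t:ℂ) * Complex.I) * Complex.exp (-(t:ℂ) * Complex.I) = 1 := by
  rw [← Complex.exp_add]
  simp

lemma root_char (n : ℕ) (a : Fin n → ℂ) (ha : ∀ i, ‖a i‖ < 1) (t : ℝ) (c : ℂ) :
    (Complex.exp ((t:ℂ) * Complex.I) * ∏ i, (Complex.exp ((t:ℂ) * Complex.I) - a i)
      = c * ∏ i, (1 - (starRingEnd ℂ) (a i) * Complex.exp ((t:ℂ) * Complex.I)))
    ↔ Complex.exp ((Gfun n a t : ℝ) * Complex.I) = c := by
  set z := Complex.exp ((t:ℂ) * Complex.I) with hz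
  set e := Complex.exp (-(t:ℂ) * Complex.I) with he
  have hze : z * e = 1 := z_mul_e t
  have hfac : ∀ i : Fin n, z - a i = z * (1 - a i * e) := by
    intro i
    have h' : z * (a i * e) = a i * (z * e) := by ring
    rw [mul_sub, mul_one, h', hze, mul_one]
  have hconj : ∀ i : Fin n, 1 - (starRingEnd ℂ) (a i) * z = (starRingEnd ℂ) (1 - a i * e) := by
    intro i
    rw [map_sub, map_one, map_mul, conj_exp_neg t]
  have hprod1 : ∏ i, (z - a i) = z ^ n * ∏ i, (1 - a i * e) := by
    rw [Finset.prod_congr rfl (fun i _ => hfac i), Finset.prod_mul_distrib]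
    congr 1
    rw [Finset.prod_const, Finset.card_univ, Fintype.card_fin]
  have hne : ∀ i : Fin n, (1 - a i * e) ≠ 0 := fun i => c_ne_zero (ha i) t
  have hprodne : (∏ i, (starRingEnd ℂ) (1 - a i * e)) ≠ 0 :=
    Finset.prod_ne_zero_iff.mpr fun i _ => star_ne_zero.mpr (hne i)
  have hGexp : z ^ (n + 1) * ∏ i, (1 - a i * e)
      = Complex.exp ((Gfun n a t : ℝ) * Complex.I) * ∏ i, (starRingEnd ℂ) (1 - a i * e) := by
    have h1 : ∀ i : Fin n, (1 - a i * e)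
        = Complex.exp ((2 * (Complex.log (1 - a i * e)).im : ℝ) * Complex.I)
          * (starRingEnd ℂ) (1 - a i * e) := by
      intro i
      have hX : (starRingEnd ℂ) (1 - a i * e) ≠ 0 := star_ne_zero.mpr (hne i)
      rw [← div_conj_eq (hne i), div_mul_cancel₀ _ hX]
    calc z ^ (n + 1) * ∏ i, (1 - a i * e)
        = z ^ (n + 1) * ∏ i, (Complex.exp ((2 * (Complex.log (1 - a i * e)).im : ℝ) * Complex.I)
            * (starRingEnd ℂ) (1 - a i * e)) := by
          rw [← Finset.prod_congr rfl (fun i _ => h1 i)]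
      _ = (z ^ (n + 1) * ∏ i, Complex.exp ((2 * (Complex.log (1 - a i * e)).im : ℝ) * Complex.I))
            * ∏ i, (starRingEnd ℂ) (1 - a i * e) := by
          rw [Finset.prod_mul_distrib]; ring
      _ = Complex.exp ((Gfun n a t : ℝ) * Complex.I) * ∏ i, (starRingEnd ℂ) (1 - a i * e) := by
          congr 1
          rw [← Complex.exp_sum, hz, ← Complex.exp_nat_mul, ← Complex.exp_add]
          congr 1
          have hG : ((Gfun n a t : ℝ) : ℂ)
              = ((n:ℂ)+1) * (t:ℂ) + 2 * ∑ i, ((Complex.log (1 - a i * e)).im : ℂ) := by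
            unfold Gfun
            push_cast [he]
            ring
          rw [hG]
          have hsum : ∑ i : Fin n, ((2 * (Complex.log (1 - a i * e)).im : ℝ) : ℂ) * Complex.I
              = (2 * ∑ i, ((Complex.log (1 - a i * e)).im : ℂ)) * Complex.I := by
            rw [Finset.mul_sum, Finset.sum_mul]
            apply Finset.sum_congr rfl
            intro i _
            push_cast
            ring
          rw [hsum]
          push_cast
          ring
  constructor
  · intro h
    rw [hprod1, Finset.prod_congr rfl (fun i _ => hconj i)] at h
    have h2 : z ^ (n+1) * ∏ i, (1 - a i * e) = c * ∏ i, (starRingEnd ℂ) (1 - a i * e) := by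
      rw [pow_succ]
      calc z ^ n * z * ∏ i, (1 - a i * e) = z * (z ^ n * ∏ i, (1 - a i * e)) := by ring
        _ = c * ∏ i, (starRingEnd ℂ) (1 - a i * e) := h
    rw [hGexp] at h2
    exact mul_right_cancel₀ hprodne h2
  · intro h
    rw [hprod1, Finset.prod_congr rfl (fun i _ => hconj i)]
    have h2 : z ^ (n+1) * ∏ i, (1 - a i * e) = c * ∏ i, (starRingEnd ℂ) (1 - a i * e) := by
      rw [hGexp, h]
    calc z * (z ^ n * ∏ i, (1 - a i * e)) = z ^ (n+1) * ∏ i, (1 - a i * e) := by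
          rw [pow_succ]; ring
      _ = c * ∏ i, (starRingEnd ℂ) (1 - a i * e) := h2

lemma Gfun_surj (n : ℕ) (a : Fin n → ℂ) (ha : ∀ i, ‖a i‖ < 1) :
    Function.Surjective (Gfun n a) := by
  intro y
  have hcont : Continuous (Gfun n a) :=
    Differentiable.continuous (fun t => (hasDerivAt_Gfun n a ha t).differentiableAt)
  have hper : ∀ m : ℤ, Gfun n a (2 * Real.pi * m) = Gfun n a 0 + 2 * Real.pi * ((n:ℝ)+1) * m := by
    intro m
    have := Gfun_periodic n a 0 m
    simpa using this
  have hpos : 0 < 2 * Real.pi * ((n:ℝ)+1) := by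
    have := Real.pi_pos
    positivity
  obtain ⟨m, hm⟩ := exists_int_lt ((y - Gfun n a 0) / (2 * Real.pi * ((n:ℝ)+1)))
  obtain ⟨M, hM⟩ := exists_int_gt ((y - Gfun n a 0) / (2 * Real.pi * ((n:ℝ)+1)))
  have h1 : Gfun n a (2 * Real.pi * m) ≤ y := by
    rw [hper m]
    rw [lt_div_iff₀ hpos] at hm
    nlinarith
  have h2 : y ≤ Gfun n a (2 * Real.pi * M) := by
    rw [hper M]
    rw [div_lt_iff₀ hpos] at hM
    nlinarith
  exact intermediate_value_univ (2 * Real.pi * (m:ℝ)) (2 * Real.pi * (M:ℝ)) hcont ⟨h1, h2⟩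

lemma poly_decomp (n : ℕ) (Φ : Polynomial ℂ) (hmonic : Φ.Monic) (hdeg : Φ.natDegree = n)
    (hzeros : ∀ z : ℂ, Φ.IsRoot z → ‖z‖ < 1) :
    ∃ a : Fin n → ℂ, (∀ i, ‖a i‖ < 1) ∧ (Φ = ∏ i, (X - C (a i))) ∧
      polyStar n Φ = ∏ i, (1 - C ((starRingEnd ℂ) (a i)) * X) := by
  have hsplits : Splits Φ := IsAlgClosed.splits Φ
  have hroots : Φ = (Φ.roots.map fun a => X - C a).prod :=
    (hsplits.eq_prod_roots_of_monic hmonic)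
  have hcard : Φ.roots.card = n := by
    rw [← hdeg]
    exact (Polynomial.splits_iff_card_roots.mp hsplits)
  set l := Φ.roots.toList with hldef
  have hlen : l.length = n := by rw [Multiset.length_toList, hcard]
  have hl : Φ = (l.map fun a => X - C a).prod := by
    rw [hroots, show Φ.roots = (l : Multiset ℂ) from (Φ.roots.coe_toList).symm,
      Multiset.map_coe, Multiset.prod_coe]
  have hmem : ∀ x ∈ l, ‖x‖ < 1 := by
    intro x hx
    apply hzeros
    have : x ∈ Φ.roots := by rwa [← Multiset.mem_toList]
    exact Polynomial.isRoot_of_mem_roots this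
  refine ⟨fun i => l.get (finCongr hlen.symm i), fun i => hmem _ (l.get_mem _), ?_, ?_⟩
  · rw [hl]
    rw [← List.ofFn_getElem_eq_map l (fun a => X - C a), List.prod_ofFn]
    exact Fintype.prod_equiv (finCongr hlen) _ _ (fun i => by simp)
  · unfold polyStar
    have hrc := reflect_prod_conj l
    rw [hlen] at hrc
    rw [hl, hrc]
    rw [← List.ofFn_getElem_eq_map l (fun a => 1 - C ((starRingEnd ℂ) a) * X), List.prod_ofFn]
    exact Fintype.prod_equiv (finCongr hlen) _ _ (fun i => by simp)

lemma exp_real_eq_iff {x y : ℝ} :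
    Complex.exp ((x:ℂ) * Complex.I) = Complex.exp ((y:ℂ) * Complex.I)
      ↔ ∃ k : ℤ, x = y + 2 * Real.pi * k := by
  rw [Complex.exp_eq_exp_iff_exists_int]
  constructor
  · rintro ⟨k, hk⟩
    refine ⟨k, ?_⟩
    have h2 : (x:ℂ) * Complex.I = ((y + 2 * Real.pi * k : ℝ) : ℂ) * Complex.I := by
      rw [hk]; push_cast; ring
    have h3 : (x:ℂ) = ((y + 2 * Real.pi * k : ℝ) : ℂ) :=
      mul_right_cancel₀ Complex.I_ne_zero h2
    exact_mod_cast h3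
  · rintro ⟨k, hk⟩
    refine ⟨k, ?_⟩
    rw [hk]; push_cast; ring


end AuxPOPUC

/-- The zeros of paraorthogonal polynomials `zΦ − conj(λ)Φ^*` and `zΦ − conj(μ)Φ^*` for
distinct `λ, μ` on the unit circle strictly interlace on the unit circle: there are angles
`θ₀ < φ₀ < θ₁ < φ₁ < ⋯ < θ_n < φ_n < θ₀ + 2π` listing all zeros of the two polynomials. -/
theorem popuc_zeros_interlace
    (n : ℕ) (Φ : Polynomial ℂ) (hmonic : Φ.Monic) (hdeg : Φ.natDegree = n)
    (hzeros : ∀ z : ℂ, Φ.IsRoot z → ‖z‖ < 1)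
    (lam mu : ℂ) (hlam : ‖lam‖ = 1) (hmu : ‖mu‖ = 1) (hne : lam ≠ mu) :
    ∃ θ φ : ℕ → ℝ,
      (∀ j ≤ n, (X * Φ - C ((starRingEnd ℂ) lam) * polyStar n Φ).IsRoot
          (Complex.exp (θ j * Complex.I))) ∧
      (∀ j ≤ n, (X * Φ - C ((starRingEnd ℂ) mu) * polyStar n Φ).IsRoot
          (Complex.exp (φ j * Complex.I))) ∧
      (∀ u : ℂ, (X * Φ - C ((starRingEnd ℂ) lam) * polyStar n Φ).IsRoot u →
          ∃ j ≤ n, u = Complex.exp (θ j * Complex.I)) ∧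
      (∀ u : ℂ, (X * Φ - C ((starRingEnd ℂ) mu) * polyStar n Φ).IsRoot u →
          ∃ j ≤ n, u = Complex.exp (φ j * Complex.I)) ∧
      (∀ j ≤ n, θ j < φ j) ∧
      (∀ j < n, φ j < θ (j + 1)) ∧
      φ n < θ 0 + 2 * Real.pi := by
  obtain ⟨a, ha, hΦ, hstar⟩ := poly_decomp n Φ hmonic hdeg hzeros
  have hmono : StrictMono (Gfun n a) := strictMono_of_deriv_pos (fun t => by
    rw [(hasDerivAt_Gfun n a ha t).deriv]; exact Gderiv_pos n a ha t)
  have hsurj : Function.Surjective (Gfun n a) := Gfun_surj n a ha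
  set e : ℝ ≃o ℝ := StrictMono.orderIsoOfSurjective (Gfun n a) hmono hsurj with hedef
  have hG_e : ∀ x : ℝ, Gfun n a (e.symm x) = x := fun x => e.apply_symm_apply x
  -- evaluation identity
  have heval : ∀ (c z : ℂ), (X * Φ - C c * polyStar n Φ).IsRoot z ↔
      z * ∏ i, (z - a i) = c * ∏ i, (1 - (starRingEnd ℂ) (a i) * z) := by
    intro c z
    rw [Polynomial.IsRoot, Polynomial.eval_sub, Polynomial.eval_mul, Polynomial.eval_mul,
      Polynomial.eval_X, Polynomial.eval_C, hstar, hΦ, Polynomial.eval_prod,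
      Polynomial.eval_prod, sub_eq_zero]
    have h1 : ∀ i : Fin n, Polynomial.eval z (X - C (a i)) = z - a i := by intro i; simp
    have h2 : ∀ i : Fin n, Polynomial.eval z (1 - C ((starRingEnd ℂ) (a i)) * X)
        = 1 - (starRingEnd ℂ) (a i) * z := by intro i; simp
    rw [Finset.prod_congr rfl (fun i _ => h1 i), Finset.prod_congr rfl (fun i _ => h2 i)]
  -- angles
  have hexpα : Complex.exp ((((starRingEnd ℂ) lam).arg : ℂ) * Complex.I) = (starRingEnd ℂ) lam := by
    have h := Complex.norm_mul_exp_arg_mul_I ((starRingEnd ℂ) lam)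
    have habs : ‖(starRingEnd ℂ) lam‖ = 1 := by
      rw [RCLike.norm_conj]; exact hlam
    rw [habs] at h
    simpa using h
  have hexpβ0 : Complex.exp ((((starRingEnd ℂ) mu).arg : ℂ) * Complex.I) = (starRingEnd ℂ) mu := by
    have h := Complex.norm_mul_exp_arg_mul_I ((starRingEnd ℂ) mu)
    have habs : ‖(starRingEnd ℂ) mu‖ = 1 := by
      rw [RCLike.norm_conj]; exact hmu
    rw [habs] at h
    simpa using h
  set α := ((starRingEnd ℂ) lam).arg with hαdef
  set β0 := ((starRingEnd ℂ) mu).arg with hβ0def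
  have hβ0ne : β0 ≠ α := by
    intro hcontra
    apply hne
    have : (starRingEnd ℂ) mu = (starRingEnd ℂ) lam := by
      rw [← hexpβ0, ← hexpα, hcontra]
    exact ((starRingEnd ℂ).injective this).symm
  set β : ℝ := if α < β0 then β0 else β0 + 2 * Real.pi with hβdef
  have hexpβ : Complex.exp ((β : ℂ) * Complex.I) = (starRingEnd ℂ) mu := by
    rw [hβdef]
    split_ifs
    · exact hexpβ0
    · rw [← hexpβ0]
      apply exp_real_eq_iff.mpr
      exact ⟨1, by push_cast; ring⟩
  have hαβ : α < β ∧ β < α + 2 * Real.pi := by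
    have hα1 : α ≤ Real.pi := Complex.arg_le_pi _
    have hα2 : -Real.pi < α := Complex.neg_pi_lt_arg _
    have hβ1 : β0 ≤ Real.pi := Complex.arg_le_pi _
    have hβ2 : -Real.pi < β0 := Complex.neg_pi_lt_arg _
    have hπ := Real.pi_pos
    rw [hβdef]
    split_ifs with hcase
    · constructor
      · exact hcase
      · linarith
    · push_neg at hcase
      have : β0 < α := lt_of_le_of_ne hcase hβ0ne
      constructor
      · linarith
      · linarith
  -- define the angle sequences
  refine ⟨fun j => e.symm (α + 2 * Real.pi * j), fun j => e.symm (β + 2 * Real.pi * j),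
    ?_, ?_, ?_, ?_, ?_, ?_, ?_⟩
  · -- roots θ
    intro j _
    rw [heval]
    apply (root_char n a ha _ _).mpr
    beta_reduce
    rw [hG_e]
    rw [← hexpα]
    apply exp_real_eq_iff.mpr
    exact ⟨j, by push_cast; ring⟩
  · intro j _
    rw [heval]
    apply (root_char n a ha _ _).mpr
    rw [hG_e]
    rw [← hexpβ]
    apply exp_real_eq_iff.mpr
    exact ⟨j, by push_cast; ring⟩
  · -- completeness θ
    intro u hu
    rw [heval] at hu
    have hu1 : ‖u‖ = 1 := by
      apply on_circle ha _ hu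
      rw [RCLike.norm_conj]; exact hlam
    have hu2 : u = Complex.exp ((u.arg : ℂ) * Complex.I) := by
      have h := Complex.norm_mul_exp_arg_mul_I u
      rw [hu1] at h
      simpa using h.symm
    set t := u.arg
    rw [hu2] at hu
    have hchar := (root_char n a ha t _).mp hu
    have : Complex.exp ((Gfun n a t : ℂ) * Complex.I) = Complex.exp ((α : ℂ) * Complex.I) := by
      rw [hchar, hexpα]
    obtain ⟨k, hk⟩ := exp_real_eq_iff.mp this
    -- split k = (n+1) * m + j
    set m := k / ((n:ℤ) + 1) with hmdef
    set j := k % ((n:ℤ) + 1) with hjdef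
    have hn1pos : (0:ℤ) < (n:ℤ) + 1 := by positivity
    have hj0 : 0 ≤ j := Int.emod_nonneg k (by positivity)
    have hjn : j < (n:ℤ) + 1 := Int.emod_lt_of_pos k hn1pos
    have hksplit : k = ((n:ℤ) + 1) * m + j := by
      rw [hmdef, hjdef]; exact (Int.mul_ediv_add_emod k ((n:ℤ)+1)).symm
    refine ⟨j.toNat, ?_, ?_⟩
    · omega
    · have hGt' : Gfun n a (t - 2 * Real.pi * m) = α + 2 * Real.pi * (j.toNat : ℝ) := by
        have hper := Gfun_periodic n a (t - 2 * Real.pi * m) m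
        have ht : t - 2 * Real.pi * m + 2 * Real.pi * m = t := by ring
        rw [ht] at hper
        have : Gfun n a (t - 2 * Real.pi * m) = Gfun n a t - 2 * Real.pi * ((n:ℝ)+1) * m := by linarith
        rw [this, hk]
        have hj' : (j.toNat : ℝ) = (j : ℝ) := by
          exact_mod_cast congrArg (fun x : ℤ => (x : ℝ)) (Int.toNat_of_nonneg hj0)
        rw [hj']
        have : (k : ℝ) = ((n:ℝ) + 1) * (m : ℝ) + (j : ℝ) := by exact_mod_cast hksplit
        rw [this]
        ring
      have hteq : t - 2 * Real.pi * m = e.symm (α + 2 * Real.pi * (j.toNat:ℝ)) := by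
        apply hmono.injective
        rw [hGt', hG_e]
      rw [hu2]
      apply exp_real_eq_iff.mpr
      refine ⟨m, ?_⟩
      beta_reduce
      rw [← hteq]
      ring
  · -- completeness φ
    intro u hu
    rw [heval] at hu
    have hu1 : ‖u‖ = 1 := by
      apply on_circle ha _ hu
      rw [RCLike.norm_conj]; exact hmu
    have hu2 : u = Complex.exp ((u.arg : ℂ) * Complex.I) := by
      have h := Complex.norm_mul_exp_arg_mul_I u
      rw [hu1] at h
      simpa using h.symm
    set t := u.arg
    rw [hu2] at hu
    have hchar := (root_char n a ha t _).mp hu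
    have : Complex.exp ((Gfun n a t : ℂ) * Complex.I) = Complex.exp ((β : ℂ) * Complex.I) := by
      rw [hchar, hexpβ]
    obtain ⟨k, hk⟩ := exp_real_eq_iff.mp this
    set m := k / ((n:ℤ) + 1) with hmdef
    set j := k % ((n:ℤ) + 1) with hjdef
    have hn1pos : (0:ℤ) < (n:ℤ) + 1 := by positivity
    have hj0 : 0 ≤ j := Int.emod_nonneg k (by positivity)
    have hjn : j < (n:ℤ) + 1 := Int.emod_lt_of_pos k hn1pos
    have hksplit : k = ((n:ℤ) + 1) * m + j := by
      rw [hmdef, hjdef]; exact (Int.mul_ediv_add_emod k ((n:ℤ)+1)).symm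
    refine ⟨j.toNat, ?_, ?_⟩
    · omega
    · have hGt' : Gfun n a (t - 2 * Real.pi * m) = β + 2 * Real.pi * (j.toNat : ℝ) := by
        have hper := Gfun_periodic n a (t - 2 * Real.pi * m) m
        have ht : t - 2 * Real.pi * m + 2 * Real.pi * m = t := by ring
        rw [ht] at hper
        have : Gfun n a (t - 2 * Real.pi * m) = Gfun n a t - 2 * Real.pi * ((n:ℝ)+1) * m := by linarith
        rw [this, hk]
        have hj' : (j.toNat : ℝ) = (j : ℝ) := by
          exact_mod_cast congrArg (fun x : ℤ => (x : ℝ)) (Int.toNat_of_nonneg hj0)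
        rw [hj']
        have : (k : ℝ) = ((n:ℝ) + 1) * (m : ℝ) + (j : ℝ) := by exact_mod_cast hksplit
        rw [this]
        ring
      have hteq : t - 2 * Real.pi * m = e.symm (β + 2 * Real.pi * (j.toNat:ℝ)) := by
        apply hmono.injective
        rw [hGt', hG_e]
      rw [hu2]
      apply exp_real_eq_iff.mpr
      refine ⟨m, ?_⟩
      beta_reduce
      rw [← hteq]
      ring
  · -- θ j < φ j
    intro j _
    apply e.symm.strictMono
    have := hαβ.1
    linarith
  · -- φ j < θ (j+1)
    intro j _
    apply e.symm.strictMono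
    have := hαβ.2
    push_cast
    linarith
  · -- φ n < θ 0 + 2π
    have h1 : Gfun n a (e.symm (α + 2 * Real.pi * ((0:ℕ):ℝ)) + 2 * Real.pi)
        = α + 2 * Real.pi * ((n:ℝ) + 1) := by
      have hper := Gfun_periodic n a (e.symm (α + 2 * Real.pi * ((0:ℕ):ℝ))) 1
      have hone : (((1:ℤ)):ℝ) = 1 := by norm_num
      rw [hone] at hper
      rw [show e.symm (α + 2 * Real.pi * ((0:ℕ):ℝ)) + 2 * Real.pi
          = e.symm (α + 2 * Real.pi * ((0:ℕ):ℝ)) + 2 * Real.pi * 1 by ring]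
      rw [hper, hG_e]
      push_cast
      ring
    have h2 : Gfun n a (e.symm (β + 2 * Real.pi * ((n:ℕ):ℝ))) = β + 2 * Real.pi * n := hG_e _
    have hlt : Gfun n a (e.symm (β + 2 * Real.pi * ((n:ℕ):ℝ)))
        < Gfun n a (e.symm (α + 2 * Real.pi * ((0:ℕ):ℝ)) + 2 * Real.pi) := by
      rw [h1, h2]
      have := hαβ.2
      linarith
    exact hmono.lt_iff_lt.mp hlt
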